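/- Let V be a finite-dimensional ℚ-vector space with a nondegenerate symmetric bilinear form q, and let T be an isometry of (V, q) which preserves a full lattice L ⊂ V. Suppose there is a T-invariant subspace U ⊆ V on which T acts with finite order and such that the restriction of q to U is nondegenerate of signature making q|_{U^⊥} negative definite. Then T has finite order on V. -/

import Mathlib

/-- Let `V` be a finite-dimensional `ℚ`-vector space with a nondegenerate
symmetric bilinear form `q`, and let `T` be an isometry of `(V, q)` preserving a full
lattice `L ⊂ V`.  Suppose there is a `T`-invariant subspace `U ⊆ V` on which `T` acts with
finite order, such that `q|_U` is nondegenerate and `q` is negative definite on `U^⊥`.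
Then `T` has finite order on `V`. -/
lemma cs_aux {V : Type*} [AddCommGroup V] [Module ℚ V] (p : V →ₗ[ℚ] V →ₗ[ℚ] ℚ)
    (hs : ∀ x y, p x y = p y x) (hpos : ∀ x, 0 ≤ p x x) (x y : V) :
    (p x y)^2 ≤ p x x * p y y := by
  rcases eq_or_lt_of_le (hpos y) with h | h
  · have hxy : p x y = 0 := by
      by_contra hne
      have hkey := hpos (x - ((p x x + 1)/(2 * p x y)) • y)
      simp only [map_sub, map_smul, LinearMap.sub_apply, LinearMap.smul_apply,
        smul_eq_mul] at hkey
      rw [hs y x, ← h, mul_zero, sub_zero] at hkey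
      have ht : ((p x x + 1)/(2 * p x y)) * p x y = (p x x + 1)/2 := by
        field_simp
      rw [ht] at hkey
      linarith
    simp [hxy, ← h]
  · have key := hpos ((p y y) • x - (p x y) • y)
    simp only [map_sub, map_smul, LinearMap.sub_apply, LinearMap.smul_apply,
      smul_eq_mul] at key
    rw [hs y x] at key
    nlinarith [key, h]

lemma key_lemma (V : Type*) [AddCommGroup V] [Module ℚ V] [FiniteDimensional ℚ V]
    (p : V →ₗ[ℚ] V →ₗ[ℚ] ℚ) (hs : ∀ x y, p x y = p y x)
    (hpos : ∀ x, 0 ≤ p x x) (hdef : ∀ x, p x x = 0 → x = 0)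
    (T : V ≃ₗ[ℚ] V) (hT : ∀ x y, p (T x) (T y) = p x y)
    (L : Submodule ℤ V) (hLfg : L.FG)
    (hLfull : Submodule.span ℚ (L : Set V) = ⊤)
    (hTL : ∀ x ∈ L, T x ∈ L) :
    ∃ n : ℕ, 0 < n ∧ ∀ x : V, (T ^ n) x = x := by
  classical
  haveI : Module.Finite ℤ L := Module.Finite.iff_fg.mpr hLfg
  haveI : Module.Free ℤ L := by
    haveI : Module.IsTorsionFree ℤ V := Module.IsTorsionFree.trans_faithfulSMul ℤ ℚ V
    infer_instance
  set ι := Module.Free.ChooseBasisIndex ℤ L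
  set bL : Module.Basis ι ℤ L := Module.Free.chooseBasis ℤ L
  set v : ι → V := fun i => (bL i : V) with hv
  have hvL : ∀ i, v i ∈ L := fun i => (bL i).2
  -- linear independence over ℚ
  have hliZ : LinearIndependent ℤ v := by
    have := bL.linearIndependent
    exact this.map' L.subtype (Submodule.ker_subtype L)
  have hli : LinearIndependent ℚ v := (LinearIndependent.iff_fractionRing ℤ ℚ).mp hliZ
  -- every element of L is a ℚ-combination with integer coefficients
  have hcomb : ∀ x, ∀ hx : x ∈ L, x = ∑ i, ((bL.repr ⟨x, hx⟩ i : ℤ) : ℚ) • v i := by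
    intro x hx
    have h1 : (⟨x, hx⟩ : L) = ∑ i, bL.repr ⟨x, hx⟩ i • bL i := (bL.sum_repr ⟨x, hx⟩).symm
    have h2 := congrArg (L.subtype) h1
    simp only [map_sum, map_zsmul, Submodule.coe_subtype] at h2
    simpa [Int.cast_smul_eq_zsmul] using h2
  have hspan : ⊤ ≤ Submodule.span ℚ (Set.range v) := by
    rw [← hLfull, Submodule.span_le]
    intro x hx
    rw [hcomb x hx]
    exact Submodule.sum_mem _ fun i _ =>
      Submodule.smul_mem _ _ (Submodule.subset_span ⟨i, rfl⟩)
  set bV : Module.Basis ι ℚ V := Module.Basis.mk hli hspan with hbV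
  have hbVv : ∀ i, bV i = v i := fun i => Module.Basis.mk_apply hli hspan i
  -- integrality of coordinates of lattice elements
  have hint : ∀ x ∈ L, ∀ i, ∃ c : ℤ, (c : ℚ) = bV.repr x i := by
    intro x hx i
    refine ⟨bL.repr ⟨x, hx⟩ i, ?_⟩
    have h1 : x = ∑ j, ((bL.repr ⟨x, hx⟩ j : ℤ) : ℚ) • bV j := by
      simpa only [hbVv] using hcomb x hx
    conv_rhs => rw [h1]
    rw [Module.Basis.repr_sum_self]
  -- T^k preserves L and p
  have hTkL : ∀ k : ℕ, ∀ x ∈ L, (T ^ k) x ∈ L := by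
    intro k
    induction k with
    | zero => intro x hx; simpa using hx
    | succ m ih =>
      intro x hx
      have : (T ^ (m + 1)) x = T ((T ^ m) x) := by
        rw [pow_succ']
        rfl
      rw [this]
      exact hTL _ (ih x hx)
  have hpTk : ∀ k : ℕ, ∀ x y, p ((T ^ k) x) ((T ^ k) y) = p x y := by
    intro k
    induction k with
    | zero => intro x y; simp
    | succ m ih =>
      intro x y
      have h1 : (T ^ (m + 1)) x = T ((T ^ m) x) := by rw [pow_succ']; rfl
      have h2 : (T ^ (m + 1)) y = T ((T ^ m) y) := by rw [pow_succ']; rfl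
      rw [h1, h2, hT, ih]
  -- dual basis with respect to p
  have pnd : LinearMap.BilinForm.Nondegenerate p :=
    ⟨fun m h => hdef m (h m), fun m h => hdef m (h m)⟩
  set D : Module.Basis ι ℚ V := LinearMap.BilinForm.dualBasis p pnd bV with hD
  have hdual : ∀ i j, p (D i) (bV j) = if j = i then 1 else 0 := fun i j =>
    LinearMap.BilinForm.apply_dualBasis_left (B := p) pnd bV i j
  have hrepr : ∀ (x : V) (i : ι), bV.repr x i = p (D i) x := by
    intro x i
    conv_rhs => rw [← bV.sum_repr x]
    rw [map_sum]
    simp only [map_smul, smul_eq_mul, hdual, mul_ite, mul_one, mul_zero]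
    rw [Finset.sum_ite_eq' Finset.univ i (fun j => bV.repr x j)]
    simp
  -- bound constant
  set R : ℚ := ∑ i, ∑ j, p (D i) (D i) * p (bV j) (bV j) with hR
  have hterm : ∀ i j, p (D i) (D i) * p (bV j) (bV j) ≤ R := by
    intro i j
    have h1 : ∀ a b, 0 ≤ p (D a) (D a) * p (bV b) (bV b) := fun a b =>
      mul_nonneg (hpos _) (hpos _)
    calc p (D i) (D i) * p (bV j) (bV j)
        ≤ ∑ j', p (D i) (D i) * p (bV j') (bV j') :=
          Finset.single_le_sum (fun b _ => h1 i b) (Finset.mem_univ j)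
      _ ≤ R := Finset.single_le_sum
          (fun a _ => Finset.sum_nonneg fun b _ => h1 a b) (Finset.mem_univ i)
  set N : ℤ := ⌈R⌉ with hN
  -- the integer matrices of the powers of T
  have hAk : ∀ (k : ℕ) (i j : ι), ∃ c : ℤ, (c : ℚ) = bV.repr ((T ^ k) (bV j)) i := by
    intro k i j
    apply hint
    apply hTkL
    rw [hbVv]
    exact hvL j
  choose A hA using hAk
  -- entries are bounded
  have hbound : ∀ k i j, A k i j ∈ Finset.Icc (-N) N := by
    intro k i j
    have h1 : ((A k i j : ℚ))^2 ≤ (N : ℚ) := by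
      rw [hA k i j, hrepr]
      calc (p (D i) ((T ^ k) (bV j)))^2
          ≤ p (D i) (D i) * p ((T ^ k) (bV j)) ((T ^ k) (bV j)) :=
            cs_aux p hs hpos _ _
        _ = p (D i) (D i) * p (bV j) (bV j) := by rw [hpTk]
        _ ≤ R := hterm i j
        _ ≤ (N : ℚ) := Int.le_ceil R
    have h2 : (A k i j)^2 ≤ N := by exact_mod_cast h1
    have h3 : (0 : ℤ) ≤ (A k i j)^2 := sq_nonneg _
    rw [Finset.mem_Icc]
    constructor
    · rcases le_or_gt 0 (A k i j) with h | h
      · linarith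
      · nlinarith
    · rcases le_or_gt (A k i j) 0 with h | h
      · linarith
      · nlinarith
  -- pigeonhole
  set S : Finset (ι → ι → ℤ) :=
    Fintype.piFinset (fun _ => Fintype.piFinset (fun _ => Finset.Icc (-N) N)) with hS
  have hmap : Set.MapsTo (fun k => A k) (Set.univ : Set ℕ) (S : Set (ι → ι → ℤ)) := by
    intro k _
    simp only [hS, Finset.coe_sort_coe, Finset.mem_coe, Fintype.mem_piFinset]
    intro i j
    exact hbound k i j
  obtain ⟨k, -, l, -, hkl, hAeq⟩ :=
    Set.infinite_univ.exists_ne_map_eq_of_mapsTo hmap S.finite_toSet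
  -- deduce T^k = T^l on basis vectors, hence everywhere
  have hkey : ∀ k l : ℕ, A k = A l → ∀ x : V, (T ^ k) x = (T ^ l) x := by
    intro k l hAe x
    have heq : ((T ^ k : V ≃ₗ[ℚ] V) : V →ₗ[ℚ] V) = ((T ^ l : V ≃ₗ[ℚ] V) : V →ₗ[ℚ] V) := by
      apply bV.ext
      intro j
      apply bV.repr.injective
      ext i
      simp only [LinearEquiv.coe_coe]
      rw [← hA k i j, ← hA l i j, hAe]
    exact LinearMap.congr_fun heq x
  -- conclude
  rcases hkl.lt_or_gt with h | h
  · refine ⟨l - k, by omega, fun x => ?_⟩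
    have h1 : (T ^ k) ((T ^ (l - k)) x) = (T ^ k) x := by
      have : (T ^ k) ((T ^ (l - k)) x) = (T ^ (k + (l - k))) x := by
        rw [pow_add]; rfl
      rw [this, Nat.add_sub_cancel' h.le]
      exact (hkey k l hAeq x).symm
    exact (T ^ k).injective h1
  · refine ⟨k - l, by omega, fun x => ?_⟩
    have h1 : (T ^ l) ((T ^ (k - l)) x) = (T ^ l) x := by
      have : (T ^ l) ((T ^ (k - l)) x) = (T ^ (l + (k - l))) x := by
        rw [pow_add]; rfl
      rw [this, Nat.add_sub_cancel' h.le]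
      exact hkey k l hAeq x
    exact (T ^ l).injective h1

theorem stmt_12 (V : Type*) [AddCommGroup V] [Module ℚ V] [FiniteDimensional ℚ V]
    (q : V →ₗ[ℚ] V →ₗ[ℚ] ℚ)
    (hsymm : ∀ x y, q x y = q y x)
    (hnd : ∀ v : V, (∀ w : V, q v w = 0) → v = 0)
    (T : V ≃ₗ[ℚ] V)
    (hisom : ∀ x y, q (T x) (T y) = q x y)
    (L : Submodule ℤ V) (hLfg : L.FG)
    (hLfull : Submodule.span ℚ (L : Set V) = ⊤)
    (hTL : ∀ x ∈ L, T x ∈ L) (hTL' : ∀ x ∈ L, T.symm x ∈ L)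
    (U : Submodule ℚ V)
    (hTU : ∀ x ∈ U, T x ∈ U)
    (hUfin : ∃ n : ℕ, 0 < n ∧ ∀ x ∈ U, (T ^ n) x = x)
    (hUnd : ∀ x ∈ U, x ≠ 0 → ∃ y ∈ U, q x y ≠ 0)
    (hUperp : ∀ v : V, (∀ u ∈ U, q v u = 0) → v ≠ 0 → q v v < 0) :
    ∃ n : ℕ, 0 < n ∧ ∀ x : V, (T ^ n) x = x := by
  classical
  obtain ⟨n, hn, hTn⟩ := hUfin
  -- the orthogonal complement
  set W : Submodule ℚ V := LinearMap.BilinForm.orthogonal q U with hW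
  have hrefl : q.IsRefl := fun x y h => by rw [hsymm]; exact h
  have hmemW : ∀ x : V, x ∈ W ↔ ∀ u ∈ U, q u x = 0 := by
    intro x
    rw [hW, LinearMap.BilinForm.mem_orthogonal_iff]
  have hmemW' : ∀ x : V, x ∈ W ↔ ∀ u ∈ U, q x u = 0 := by
    intro x
    rw [hmemW]
    constructor <;> intro h u hu <;> rw [hsymm] <;> exact h u hu
  have hrestr : ((LinearMap.BilinForm.restrict q U)).Nondegenerate := by
    refine LinearMap.BilinForm.Nondegenerate.ofSeparatingLeft ?_
    intro m h
    by_contra hne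
    have hm : (m : V) ≠ 0 := fun h0 => hne (Subtype.ext h0)
    obtain ⟨y, hy, hqy⟩ := hUnd m m.2 hm
    exact hqy (h ⟨y, hy⟩)
  have compl : IsCompl U W :=
    LinearMap.BilinForm.isCompl_orthogonal_of_restrict_nondegenerate hrefl hrestr
  -- projection onto U along W
  set πU : V →ₗ[ℚ] V := U.subtype ∘ₗ U.projectionOnto W compl with hπU
  have hπU_mem : ∀ x, πU x ∈ U := fun x => (U.projectionOnto W compl x).2
  have hproj : ∀ u ∈ U, ∀ w ∈ W, πU (u + w) = u := by
    intro u hu w hw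
    simp only [hπU, LinearMap.comp_apply, map_add]
    rw [Submodule.projectionOnto_apply_left compl ⟨u, hu⟩,
      Submodule.projectionOnto_apply_right compl ⟨w, hw⟩]
    simp
  have hdecomp : ∀ x : V, ∃ u ∈ U, ∃ w ∈ W, x = u + w := by
    intro x
    have hx : x ∈ U ⊔ W := by rw [compl.sup_eq_top]; trivial
    obtain ⟨u, hu, w, hw, hx⟩ := Submodule.mem_sup.mp hx
    exact ⟨u, hu, w, hw, hx.symm⟩
  have hsubW : ∀ x : V, x - πU x ∈ W := by
    intro x
    obtain ⟨u, hu, w, hw, hx⟩ := hdecomp x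
    rw [hx, hproj u hu w hw, add_sub_cancel_left]
    exact hw
  -- iterates preserve U
  have hTUk : ∀ k : ℕ, ∀ u ∈ U, (T ^ k) u ∈ U := by
    intro k
    induction k with
    | zero => intro u hu; simpa using hu
    | succ m ih =>
      intro u hu
      have : (T ^ (m + 1)) u = T ((T ^ m) u) := by rw [pow_succ']; rfl
      rw [this]; exact hTU _ (ih u hu)
  have hTinvU : ∀ u ∈ U, T.symm u ∈ U := by
    intro u hu
    have h1 : T ((T ^ (n - 1)) u) = u := by
      have : T ((T ^ (n - 1)) u) = (T ^ (n - 1 + 1)) u := by rw [pow_succ']; rfl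
      rw [this, Nat.sub_add_cancel hn]
      exact hTn u hu
    have : T.symm u = (T ^ (n - 1)) u := by
      rw [LinearEquiv.symm_apply_eq, h1]
    rw [this]
    exact hTUk _ u hu
  have hTW : ∀ w ∈ W, T w ∈ W := by
    intro w hw
    rw [hmemW']
    intro u hu
    have : q (T w) u = q w (T.symm u) := by
      conv_lhs => rw [show u = T (T.symm u) by simp]
      rw [hisom]
    rw [this]
    exact (hmemW' w).mp hw _ (hTinvU u hu)
  have hTWk : ∀ k : ℕ, ∀ w ∈ W, (T ^ k) w ∈ W := by
    intro k
    induction k with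
    | zero => intro w hw; simpa using hw
    | succ m ih =>
      intro w hw
      have : (T ^ (m + 1)) w = T ((T ^ m) w) := by rw [pow_succ']; rfl
      rw [this]; exact hTW _ (ih w hw)
  -- projection commutes with T, and with T^n
  have hπUT : ∀ x, πU (T x) = T (πU x) := by
    intro x
    have h1 : (T : V → V) x = T (πU x) + T (x - πU x) := by
      rw [← map_add]; congr 1; abel
    rw [h1, hproj _ (hTU _ (hπU_mem x)) _ (hTW _ (hsubW x))]
  have hπUTn : ∀ x, πU ((T ^ n) x) = πU x := by
    intro x
    obtain ⟨u, hu, w, hw, hx⟩ := hdecomp x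
    have h1 : (T ^ n) x = u + (T ^ n) w := by
      rw [hx, map_add, hTn u hu]
    rw [h1, hproj u hu _ (hTWk n w hw), hx, hproj u hu w hw]
  -- an auxiliary positive definite form
  set c : Module.Basis (Fin (Module.finrank ℚ V)) ℚ V := Module.finBasis ℚ V with hc
  set f0 : V →ₗ[ℚ] V →ₗ[ℚ] ℚ :=
    ∑ i, (LinearMap.mul ℚ ℚ).compl₁₂ (c.coord i) (c.coord i) with hf0
  have hf0app : ∀ x y, f0 x y = ∑ i, c.repr x i * c.repr y i := by
    intro x y
    simp [hf0, LinearMap.sum_apply, LinearMap.compl₁₂_apply, Module.Basis.coord_apply]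
  have hf0pos : ∀ x, 0 ≤ f0 x x := by
    intro x; rw [hf0app]
    exact Finset.sum_nonneg fun i _ => mul_self_nonneg _
  have hf0def : ∀ x, f0 x x = 0 → x = 0 := by
    intro x hx
    rw [hf0app] at hx
    have h1 : ∀ i ∈ Finset.univ, c.repr x i * c.repr x i = 0 :=
      (Finset.sum_eq_zero_iff_of_nonneg fun i _ => mul_self_nonneg _).mp hx
    have h2 : c.repr x = 0 := by
      ext i
      have := h1 i (Finset.mem_univ i)
      simpa [mul_self_eq_zero] using this
    have := congrArg c.repr.symm h2
    simpa using this
  have hf0symm : ∀ x y, f0 x y = f0 y x := by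
    intro x y; rw [hf0app, hf0app]
    exact Finset.sum_congr rfl fun i _ => mul_comm _ _
  -- the invariant positive definite form
  set πW : V →ₗ[ℚ] V := LinearMap.id - πU with hπW
  have hπWapp : ∀ x, πW x = x - πU x := fun x => rfl
  set p : V →ₗ[ℚ] V →ₗ[ℚ] ℚ :=
    (∑ k ∈ Finset.range n, f0.compl₁₂ (πU ∘ₗ ((T ^ k : V ≃ₗ[ℚ] V) : V →ₗ[ℚ] V))
        (πU ∘ₗ ((T ^ k : V ≃ₗ[ℚ] V) : V →ₗ[ℚ] V)))
      - q.compl₁₂ πW πW with hp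
  have hpapp : ∀ x y, p x y =
      (∑ k ∈ Finset.range n, f0 (πU ((T ^ k) x)) (πU ((T ^ k) y)))
        - q (πW x) (πW y) := by
    intro x y
    simp [hp, LinearMap.sub_apply, LinearMap.sum_apply, LinearMap.compl₁₂_apply]
  -- properties of p
  have hWneg : ∀ w ∈ W, 0 ≤ -(q w w) := by
    intro w hw
    rcases eq_or_ne w 0 with h | h
    · simp [h]
    · have := hUperp w ((hmemW' w).mp hw) h
      linarith
  have hπWW : ∀ x, πW x ∈ W := fun x => hsubW x
  have hppos : ∀ x, 0 ≤ p x x := by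
    intro x
    rw [hpapp]
    have h1 : 0 ≤ ∑ k ∈ Finset.range n, f0 (πU ((T ^ k) x)) (πU ((T ^ k) x)) :=
      Finset.sum_nonneg fun k _ => hf0pos _
    have h2 := hWneg _ (hπWW x)
    linarith
  have hpdef : ∀ x, p x x = 0 → x = 0 := by
    intro x hx
    rw [hpapp] at hx
    have h1 : 0 ≤ ∑ k ∈ Finset.range n, f0 (πU ((T ^ k) x)) (πU ((T ^ k) x)) :=
      Finset.sum_nonneg fun k _ => hf0pos _
    have h2 := hWneg _ (hπWW x)
    have hsum : ∑ k ∈ Finset.range n, f0 (πU ((T ^ k) x)) (πU ((T ^ k) x)) = 0 := by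
      linarith
    have hqw : q (πW x) (πW x) = 0 := by linarith
    have hπWx : πW x = 0 := by
      by_contra hne
      have := hUperp (πW x) ((hmemW' _).mp (hπWW x)) hne
      linarith
    have h0 : f0 (πU ((T ^ 0) x)) (πU ((T ^ 0) x)) = 0 := by
      have := (Finset.sum_eq_zero_iff_of_nonneg fun k _ => hf0pos _).mp hsum 0
        (Finset.mem_range.mpr hn)
      exact this
    have hπUx : πU x = 0 := by
      have := hf0def _ h0
      simpa using this
    have := hπWapp x
    rw [hπWx, hπUx, sub_zero] at this
    exact this.symm
  have hpsymm : ∀ x y, p x y = p y x := by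
    intro x y
    rw [hpapp, hpapp, hsymm (πW x) (πW y)]
    congr 1
    exact Finset.sum_congr rfl fun k _ => hf0symm _ _
  have hpT : ∀ x y, p (T x) (T y) = p x y := by
    intro x y
    rw [hpapp, hpapp]
    have hshift : ∀ k : ℕ, (T ^ k) (T x) = (T ^ (k + 1)) x := by
      intro k
      rw [pow_succ]; rfl
    have hshifty : ∀ k : ℕ, (T ^ k) (T y) = (T ^ (k + 1)) y := by
      intro k
      rw [pow_succ]; rfl
    have hsum : ∑ k ∈ Finset.range n, f0 (πU ((T ^ k) (T x))) (πU ((T ^ k) (T y)))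
        = ∑ k ∈ Finset.range n, f0 (πU ((T ^ k) x)) (πU ((T ^ k) y)) := by
      have hgn : f0 (πU ((T ^ n) x)) (πU ((T ^ n) y)) = f0 (πU ((T ^ 0) x)) (πU ((T ^ 0) y)) := by
        rw [hπUTn, hπUTn]
        simp
      calc ∑ k ∈ Finset.range n, f0 (πU ((T ^ k) (T x))) (πU ((T ^ k) (T y)))
          = ∑ k ∈ Finset.range n, f0 (πU ((T ^ (k + 1)) x)) (πU ((T ^ (k + 1)) y)) := by
            exact Finset.sum_congr rfl fun k _ => by rw [hshift, hshifty]
        _ = (∑ k ∈ Finset.range (n + 1), f0 (πU ((T ^ k) x)) (πU ((T ^ k) y)))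
              - f0 (πU ((T ^ 0) x)) (πU ((T ^ 0) y)) := by
            rw [Finset.sum_range_succ']; ring
        _ = ∑ k ∈ Finset.range n, f0 (πU ((T ^ k) x)) (πU ((T ^ k) y)) := by
            rw [Finset.sum_range_succ, hgn]; ring
    have hW2 : q (πW (T x)) (πW (T y)) = q (πW x) (πW y) := by
      have hx' : πW (T x) = T (πW x) := by
        rw [hπWapp, hπWapp, hπUT, ← map_sub]
      have hy' : πW (T y) = T (πW y) := by
        rw [hπWapp, hπWapp, hπUT, ← map_sub]
      rw [hx', hy', hisom]
    rw [hsum, hW2]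
  exact key_lemma V p hpsymm hppos hpdef T hpT L hLfg hLfull hTL
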